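/- Up to isomorphism there is a unique left-resolving, predecessor-separated, ι-irreducible, λ-synchronizing λ-graph system presenting a given λ-synchronizing subshift Λ, namely the canonical λ-synchronizing λ-graph system 𝔏^{λ(Λ)}. -/

import Mathlib

open List

variable {A : Type*}

/-- A subshift: a closed, shift-invariant subset of `A^ℤ` (with `A` discrete). -/
def IsSubshift [TopologicalSpace A] (Λ : Set (ℤ → A)) : Prop :=
  IsClosed Λ ∧ (∀ x ∈ Λ, (fun i => x (i + 1)) ∈ Λ) ∧ (∀ x ∈ Λ, (fun i => x (i - 1)) ∈ Λ)

/-- `w` is an admissible word of `Λ`, i.e. `w ∈ B_*(Λ)`. -/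
def Adm (Λ : Set (ℤ → A)) (w : List A) : Prop :=
  ∃ x ∈ Λ, ∃ n : ℤ, ∀ i : Fin w.length, x (n + (i : ℕ)) = w.get i

/-- `Γ_l^-(μ)`: the set of admissible words `ν` of length `l` with `νμ` admissible. -/
def Gamma (Λ : Set (ℤ → A)) (l : ℕ) (μ : List A) : Set (List A) :=
  {ν | ν.length = l ∧ Adm Λ ν ∧ Adm Λ (ν ++ μ)}

/-- `μ` is an `l`-synchronizing word of `Λ`: `Γ_l^-(μ) = Γ_l^-(μω)` for all
`ω ∈ Γ_*^+(μ)`.  Membership in `S_l(Λ)`. -/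
def LSync (Λ : Set (ℤ → A)) (l : ℕ) (μ : List A) : Prop :=
  Adm Λ μ ∧ ∀ ω : List A, Adm Λ (μ ++ ω) → Gamma Λ l μ = Gamma Λ l (μ ++ ω)

/-- `ω` is an intrinsically synchronizing word of `Λ`. -/
def IntrSync (Λ : Set (ℤ → A)) (ω : List A) : Prop :=
  Adm Λ ω ∧ ∀ μ ν : List A, Adm Λ μ → Adm Λ ν → Adm Λ (μ ++ ω) → Adm Λ (ω ++ ν) →
    Adm Λ (μ ++ ω ++ ν)

/-- Irreducibility of the subshift `Λ`. -/
def IrredShift (Λ : Set (ℤ → A)) : Prop :=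
  ∀ μ ν : List A, Adm Λ μ → Adm Λ ν → ∃ ξ : List A, Adm Λ (μ ++ ξ ++ ν)

/-- `Λ` is `λ`-synchronizing: it is irreducible and for every `η ∈ B_l(Λ)` and `k ≥ l`
there is `ν ∈ S_k(Λ)` with `ην ∈ S_{k-l}(Λ)`. -/
def LambdaSync (Λ : Set (ℤ → A)) : Prop :=
  IrredShift Λ ∧ ∀ (η : List A) (k : ℕ), Adm Λ η → η.length ≤ k →
    ∃ ν : List A, LSync Λ k ν ∧ LSync Λ (k - η.length) (η ++ ν)

/-- A `λ`-graph system over the alphabet `A`: a labeled Bratteli diagram with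
finite vertex sets `V l` and edge sets `E l` (edges from level `l` to level `l+1`),
a labeling, and surjective `ι`-maps, satisfying the local property (stated as a
label-wise counting identity, i.e. a label-preserving bijection), such that every
vertex has a successor and every vertex at level `l+1` has a predecessor. -/
structure LGS (A : Type*) where
  V : ℕ → Type*
  E : ℕ → Type*
  finV : ∀ l, Finite (V l)
  finE : ∀ l, Finite (E l)
  src : ∀ l, E l → V l
  tgt : ∀ l, E l → V (l + 1)
  lab : ∀ l, E l → A
  iota : ∀ l, V (l + 1) → V l
  iota_surj : ∀ l, Function.Surjective (iota l)
  succ : ∀ (l : ℕ) (v : V l), ∃ e : E l, src l e = v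
  pred : ∀ (l : ℕ) (v : V (l + 1)), ∃ e : E l, tgt l e = v
  local_property : ∀ (l : ℕ) (u : V l) (v : V (l + 2)) (α : A),
    Nat.card {e : E (l + 1) //
        tgt (l + 1) e = v ∧ iota l (src (l + 1) e) = u ∧ lab (l + 1) e = α}
      = Nat.card {e : E l //
        src l e = u ∧ tgt l e = iota (l + 1) v ∧ lab l e = α}

namespace LGS

variable {A : Type*}

/-- There is a labeled path in `G` starting at `v : V l`, labeled `w`, ending at `u : V l'`. -/
def PathW (G : LGS A) : ∀ (l : ℕ), G.V l → List A → ∀ (l' : ℕ), G.V l' → Prop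
  | l, v, [], l', u => ∃ h : l = l', h ▸ v = u
  | l, v, a :: w, l', u =>
      ∃ e : G.E l, G.src l e = v ∧ G.lab l e = a ∧ G.PathW (l + 1) (G.tgt l e) w l' u

/-- `G` presents the subshift `Λ`: the admissible words of `Λ` are exactly the labels of
finite labeled paths appearing somewhere in `G`. -/
def Presents (G : LGS A) (Λ : Set (ℤ → A)) : Prop :=
  ∀ w : List A, Adm Λ w ↔ ∃ (l : ℕ) (v : G.V l) (l' : ℕ) (u : G.V l'), G.PathW l v w l' u

/-- Iterated `ι`-map `ι^n : V (l+n) → V l`. -/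
def iotaN (G : LGS A) : ∀ (l n : ℕ), G.V (l + n) → G.V l
  | _, 0, v => v
  | l, n + 1, v => G.iotaN l n (G.iota (l + n) v)

/-- `G` is left-resolving: edges carrying the same label have distinct terminal vertices. -/
def LeftResolving (G : LGS A) : Prop :=
  ∀ (l : ℕ) (e f : G.E l), G.lab l e = G.lab l f → G.tgt l e = G.tgt l f → e = f

/-- The predecessor set `Γ_l^-(v)` of a vertex `v ∈ V l`: the words of length `l`
labeling paths from level `0` to `v`. -/
def PredSet (G : LGS A) (l : ℕ) (v : G.V l) : Set (List A) :=
  {w | w.length = l ∧ ∃ v0 : G.V 0, G.PathW 0 v0 w l v}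

/-- `G` is predecessor-separated. -/
def PredSeparated (G : LGS A) : Prop :=
  ∀ (l : ℕ) (u v : G.V l), G.PredSet l u = G.PredSet l v → u = v

/-- The word `w` leaves the vertex `v`. -/
def Leaves (G : LGS A) (l : ℕ) (v : G.V l) (w : List A) : Prop :=
  ∃ (l' : ℕ) (u : G.V l'), G.PathW l v w l' u

/-- The vertex `v ∈ V l` launches the word `w`: `w` leaves `v` and no other vertex of `V l`. -/
def Launches (G : LGS A) (l : ℕ) (v : G.V l) (w : List A) : Prop :=
  G.Leaves l v w ∧ ∀ v' : G.V l, G.Leaves l v' w → v' = v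

/-- `G` is a `λ`-synchronizing `λ`-graph system: every vertex launches some word. -/
def LambdaSyncSys (G : LGS A) : Prop :=
  ∀ (l : ℕ) (v : G.V l), ∃ w : List A, G.Launches l v w

/-- `G` is `ι`-irreducible. -/
def IotaIrred (G : LGS A) : Prop :=
  ∀ (l : ℕ) (v u : G.V l) (w : List A) (l' : ℕ) (t : G.V l'),
    G.PathW l u w l' t →
    ∃ (n : ℕ) (ξ : List A) (u' : G.V (l + n)) (t' : G.V (l' + n)),
      G.PathW l v ξ (l + n) u' ∧ G.iotaN l n u' = u ∧
      G.PathW (l + n) u' w (l' + n) t' ∧ G.iotaN l' n t' = t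

end LGS

namespace LGS

variable {A : Type*}

/-- Isomorphism of `λ`-graph systems: level-preserving bijections of vertices and edges
compatible with sources, terminals, labels and `ι`-maps. -/
def Isomorphic (G G' : LGS A) : Prop :=
  ∃ (Φv : ∀ l, G.V l ≃ G'.V l) (Φe : ∀ l, G.E l ≃ G'.E l),
    (∀ (l : ℕ) (e : G.E l), G'.src l (Φe l e) = Φv l (G.src l e)) ∧
    (∀ (l : ℕ) (e : G.E l), G'.tgt l (Φe l e) = Φv (l + 1) (G.tgt l e)) ∧
    (∀ (l : ℕ) (e : G.E l), G'.lab l (Φe l e) = G.lab l e) ∧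
    (∀ (l : ℕ) (v : G.V (l + 1)), G'.iota l (Φv (l + 1) v) = Φv l (G.iota l v))

/-- The characterizing properties of the canonical `λ`-synchronizing `λ`-graph system
`𝔏^{λ(Λ)}` of a `λ`-synchronizing subshift `Λ` (Theorem 3.8 of the paper): it is the
unique left-resolving, predecessor-separated, `ι`-irreducible, `λ`-synchronizing
`λ`-graph system presenting `Λ`. -/
def CanonicalProps (G : LGS A) (Λ : Set (ℤ → A)) : Prop :=
  G.Presents Λ ∧ G.LeftResolving ∧ G.PredSeparated ∧ G.IotaIrred ∧ G.LambdaSyncSys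

end LGS

section AdmLemmas

variable {A : Type*} {Λ : Set (ℤ → A)}

theorem Adm.append_left {u v : List A} (h : Adm Λ (u ++ v)) : Adm Λ u := by
  obtain ⟨x, hx, n, hn⟩ := h
  refine ⟨x, hx, n, fun i => ?_⟩
  have hi : (i : ℕ) < (u ++ v).length := by
    simp only [List.length_append]; omega
  have h2 := hn ⟨i, hi⟩
  rw [List.get_eq_getElem] at h2 ⊢
  simp only [Fin.val_mk] at h2
  rw [h2]
  exact List.getElem_append_left i.isLt

theorem Adm.append_right {u v : List A} (h : Adm Λ (u ++ v)) : Adm Λ v := by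
  obtain ⟨x, hx, n, hn⟩ := h
  refine ⟨x, hx, n + u.length, fun i => ?_⟩
  have hi : u.length + (i : ℕ) < (u ++ v).length := by
    simp only [List.length_append]; omega
  have h2 := hn ⟨u.length + i, hi⟩
  rw [List.get_eq_getElem] at h2 ⊢
  simp only [Fin.val_mk] at h2
  have harith : n + (u.length : ℤ) + ((i : ℕ) : ℤ) = n + ((u.length + (i : ℕ) : ℕ) : ℤ) := by
    push_cast; ring
  rw [harith, h2]
  rw [List.getElem_append_right (by omega)]
  simp only [Nat.add_sub_cancel_left]

/-- extend an admissible word on the left to any prescribed length -/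
theorem Adm.left_ext {w : List A} (h : Adm Λ w) (m : ℕ) :
    ∃ ξ : List A, ξ.length = m ∧ Adm Λ (ξ ++ w) := by
  obtain ⟨x, hx, n, hn⟩ := h
  refine ⟨List.ofFn (fun i : Fin m => x (n - m + i)), by simp, x, hx, n - m, fun i => ?_⟩
  rw [List.get_eq_getElem]
  rcases lt_or_ge (i : ℕ) m with hlt | hge
  · rw [List.getElem_append_left (by simpa using hlt)]
    rw [List.getElem_ofFn]
  · have hi2 : (i : ℕ) - m < w.length := by
      have := i.isLt; simp only [List.length_append, List.length_ofFn] at this; omega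
    have h2 := hn ⟨(i : ℕ) - m, hi2⟩
    rw [List.get_eq_getElem] at h2
    simp only [Fin.val_mk] at h2
    have harith : n - m + ((i : ℕ) : ℤ) = n + (((i : ℕ) - m : ℕ) : ℤ) := by
      have : (((i : ℕ) - m : ℕ) : ℤ) = ((i : ℕ) : ℤ) - (m : ℤ) := by push_cast [hge]; ring
      rw [this]; ring
    rw [harith, h2]
    rw [List.getElem_append_right (by simpa using hge)]
    congr 2
    simp

theorem Adm.of_cons {a : A} {w : List A} (h : Adm Λ (a :: w)) : Adm Λ w :=
  Adm.append_right (u := [a]) h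

theorem Adm.left_ext1 {w : List A} (h : Adm Λ w) :
    ∃ a : A, Adm Λ (a :: w) := by
  obtain ⟨ξ, hlen, hadm⟩ := h.left_ext 1
  match ξ, hlen with
  | [a], _ => exact ⟨a, hadm⟩

end AdmLemmas
section SyncLemmas

variable {A : Type*} {Λ : Set (ℤ → A)}

theorem Gamma_anti {l : ℕ} {μ ω : List A} : Gamma Λ l (μ ++ ω) ⊆ Gamma Λ l μ := by
  rintro ξ ⟨hlen, hadm, hcat⟩
  refine ⟨hlen, hadm, ?_⟩
  rw [← List.append_assoc] at hcat
  exact hcat.append_left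

theorem LSync.adm {l : ℕ} {μ : List A} (h : LSync Λ l μ) : Adm Λ μ := h.1

theorem LSync.gamma_ext {l : ℕ} {μ ω : List A} (h : LSync Λ l μ) (hω : Adm Λ (μ ++ ω)) :
    Gamma Λ l μ = Gamma Λ l (μ ++ ω) := h.2 ω hω

theorem LSync.mono_one {l : ℕ} {μ : List A} (h : LSync Λ (l + 1) μ) : LSync Λ l μ := by
  refine ⟨h.1, fun ω hω => Set.ext fun ξ => ⟨fun hmem => ?_, fun hmem => Gamma_anti hmem⟩⟩
  obtain ⟨hlen, hadm, hcat⟩ := hmem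
  obtain ⟨a, ha⟩ := hcat.left_ext1
  have hmem2 : (a :: ξ) ∈ Gamma Λ (l + 1) μ := by
    refine ⟨by simp [hlen], ?_, ha⟩
    exact Adm.append_left (u := a :: ξ) (v := μ) ha
  rw [h.2 ω hω] at hmem2
  exact ⟨hlen, hadm, hmem2.2.2.of_cons⟩

theorem LSync.of_add {μ : List A} : ∀ (d : ℕ) {l : ℕ}, LSync Λ (l + d) μ → LSync Λ l μ
  | 0, _, h => h
  | d + 1, l, h => LSync.of_add d (LSync.mono_one (by rwa [Nat.add_succ] at h))

theorem LSync.mono {μ : List A} {k l : ℕ} (hle : l ≤ k) (h : LSync Λ k μ) : LSync Λ l μ := by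
  obtain ⟨d, rfl⟩ := Nat.exists_eq_add_of_le hle
  exact LSync.of_add d h

theorem LSync.prepend {k : ℕ} {ν ρ : List A} (h : LSync Λ k ν) (hadm : Adm Λ (ρ ++ ν))
    (hle : ρ.length ≤ k) : LSync Λ (k - ρ.length) (ρ ++ ν) := by
  refine ⟨hadm, fun ω hω => Set.ext fun ξ => ⟨fun hmem => ?_, fun hmem => Gamma_anti hmem⟩⟩
  obtain ⟨hlen, hadm2, hcat⟩ := hmem
  have hmem2 : (ξ ++ ρ) ∈ Gamma Λ k ν := by
    refine ⟨by simp [hlen]; omega, ?_, ?_⟩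
    · rw [← List.append_assoc] at hcat
      exact hcat.append_left
    · rwa [List.append_assoc]
  have hνω : Adm Λ (ν ++ ω) := by
    rw [List.append_assoc] at hω
    exact hω.append_right
  rw [h.2 ω hνω] at hmem2
  refine ⟨hlen, hadm2, ?_⟩
  have := hmem2.2.2
  rwa [List.append_assoc, ← List.append_assoc ρ ν ω] at this

theorem LSync.cons {l : ℕ} {ν : List A} {α : A} (h : LSync Λ (l + 1) ν)
    (hadm : Adm Λ (α :: ν)) : LSync Λ l (α :: ν) := by
  have := h.prepend (ρ := [α]) hadm (by simp)
  simpa using this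

theorem adm_cons_of_gamma_eq {l : ℕ} {ν ν' : List A}
    (hg : Gamma Λ (l + 1) ν = Gamma Λ (l + 1) ν') {α : A} (h : Adm Λ (α :: ν)) :
    Adm Λ (α :: ν') := by
  obtain ⟨ξ, hlen, hadm⟩ := h.left_ext l
  have hmem : (ξ ++ [α]) ∈ Gamma Λ (l + 1) ν := by
    rw [List.append_cons] at hadm
    exact ⟨by simp [hlen], hadm.append_left, hadm⟩
  rw [hg] at hmem
  have := hmem.2.2
  rw [← List.append_cons] at this
  exact this.append_right

/-- the canonical set-level `ι`-map -/
def iotaSet (l : ℕ) (S : Set (List A)) : Set (List A) :=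
  {ξ | ξ.length = l ∧ ∃ a : A, (a :: ξ) ∈ S}

theorem iotaSet_gamma {l : ℕ} {μ : List A} (hμ : Adm Λ μ) :
    iotaSet l (Gamma Λ (l + 1) μ) = Gamma Λ l μ := by
  ext ξ
  constructor
  · rintro ⟨hlen, a, ⟨hlen2, hadm, hcat⟩⟩
    exact ⟨hlen, hadm.of_cons, (show Adm Λ (a :: (ξ ++ μ)) from hcat).of_cons⟩
  · rintro ⟨hlen, hadm, hcat⟩
    obtain ⟨a, ha⟩ := hcat.left_ext1
    refine ⟨hlen, a, by simp [hlen], ?_, ha⟩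
    exact Adm.append_left (u := a :: ξ) (v := μ) ha

/-- the canonical set-level source of an edge labeled `α` into target set `S` -/
def srcSet (Λ : Set (ℤ → A)) (l : ℕ) (α : A) (S : Set (List A)) : Set (List A) :=
  {ξ | ξ.length = l ∧ Adm Λ ξ ∧ ξ ++ [α] ∈ S}

theorem srcSet_gamma {l : ℕ} {ν : List A} {α : A} :
    srcSet Λ l α (Gamma Λ (l + 1) ν) = Gamma Λ l (α :: ν) := by
  ext ξ
  constructor
  · rintro ⟨hlen, hadm, ⟨_, _, hcat⟩⟩
    rw [← List.append_cons] at hcat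
    exact ⟨hlen, hadm, hcat⟩
  · rintro ⟨hlen, hadm, hcat⟩
    rw [List.append_cons] at hcat
    exact ⟨hlen, hadm, by simp [hlen], hcat.append_left, hcat⟩

theorem gamma_cons_of_gamma_eq {l : ℕ} {ν ν' : List A}
    (hg : Gamma Λ (l + 1) ν = Gamma Λ (l + 1) ν') (α : A) :
    Gamma Λ l (α :: ν) = Gamma Λ l (α :: ν') := by
  rw [← srcSet_gamma, ← srcSet_gamma, hg]

theorem LambdaSync.sync_ext (hls : LambdaSync Λ) {η : List A} (hη : Adm Λ η) (m : ℕ) :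
    ∃ ν : List A, LSync Λ (η.length + m) ν ∧ Adm Λ (η ++ ν) ∧ LSync Λ m (η ++ ν) := by
  obtain ⟨ν, h1, h2⟩ := hls.2 η (η.length + m) hη (Nat.le_add_right _ _)
  rw [Nat.add_sub_cancel_left] at h2
  exact ⟨ν, h1, h2.1, h2⟩

end SyncLemmas
section CanonicalDef

theorem card_helper {α β : Type*} (hα : ∀ x y : α, x = y) (hβ : ∀ x y : β, x = y)
    (h : Nonempty α ↔ Nonempty β) : Nat.card α = Nat.card β := by
  rcases isEmpty_or_nonempty (α := α) with hA | hA
  · have hB : IsEmpty β := ⟨fun b => hA.false (h.mpr ⟨b⟩).some⟩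
    rw [Nat.card_of_isEmpty, Nat.card_of_isEmpty]
  · have hB := h.mp hA
    rw [Nat.card_eq_one_iff_unique.mpr ⟨⟨hα⟩, hA⟩, Nat.card_eq_one_iff_unique.mpr ⟨⟨hβ⟩, hB⟩]

variable {A : Type*} [Finite A] (Λ : Set (ℤ → A))

/-- vertices of the canonical λ-graph system: `l`-past equivalence classes of
`l`-synchronizing words, realized as their Γ-sets -/
def CanV (l : ℕ) : Type _ :=
  {S : Set (List A) // ∃ μ, LSync Λ l μ ∧ S = Gamma Λ l μ}

theorem CanV.len_mem {l : ℕ} (S : CanV Λ l) {w : List A} (hw : w ∈ S.1) : w.length = l := by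
  obtain ⟨μ, _, hS⟩ := S.2; rw [hS] at hw; exact hw.1

instance finite_listlen (l : ℕ) : Finite {w : List A // w.length = l} := by
  refine Finite.of_injective (fun w => fun i : Fin l => w.1.get (Fin.cast w.2.symm i)) ?_
  intro w w' h
  apply Subtype.ext
  apply List.ext_get (by rw [w.2, w'.2])
  intro n h1 h2
  exact congrFun h ⟨n, by rw [← w.2]; exact h1⟩

instance finite_CanV (l : ℕ) : Finite (CanV Λ l) := by
  refine Finite.of_injective
    (fun S : CanV Λ l => (fun w : {w : List A // w.length = l} => w.1 ∈ S.1)) ?_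
  intro S S' h
  apply Subtype.ext
  ext w
  constructor
  · intro hw
    exact Eq.mp (congrFun h ⟨w, CanV.len_mem Λ S hw⟩) hw
  · intro hw
    exact Eq.mpr (congrFun h ⟨w, CanV.len_mem Λ S' hw⟩) hw

/-- edges of the canonical λ-graph system -/
def CanE (l : ℕ) : Type _ :=
  {p : A × CanV Λ (l + 1) //
    ∃ ν, LSync Λ (l + 1) ν ∧ (p.2).1 = Gamma Λ (l + 1) ν ∧ Adm Λ (p.1 :: ν)}

instance finite_CanE (l : ℕ) : Finite (CanE Λ l) := by
  unfold CanE; infer_instance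

def canSrc {l : ℕ} (e : CanE Λ l) : CanV Λ l :=
  ⟨srcSet Λ l e.1.1 e.1.2.1, by
    obtain ⟨ν, hν, hset, hadm⟩ := e.2
    exact ⟨e.1.1 :: ν, hν.cons hadm, by rw [hset, srcSet_gamma]⟩⟩

theorem canSrc_gamma {l : ℕ} (e : CanE Λ l) {ν : List A} (hset : e.1.2.1 = Gamma Λ (l + 1) ν) :
    (canSrc Λ e).1 = Gamma Λ l (e.1.1 :: ν) := by
  show srcSet Λ l e.1.1 e.1.2.1 = _
  rw [hset, srcSet_gamma]

def canIota {l : ℕ} (v : CanV Λ (l + 1)) : CanV Λ l :=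
  ⟨iotaSet l v.1, by
    obtain ⟨μ, hμ, hset⟩ := v.2
    exact ⟨μ, hμ.mono_one, by rw [hset, iotaSet_gamma hμ.adm]⟩⟩

theorem canIota_gamma {l : ℕ} (v : CanV Λ (l + 1)) {μ : List A} (hμ : Adm Λ μ)
    (hset : v.1 = Gamma Λ (l + 1) μ) : (canIota Λ v).1 = Gamma Λ l μ := by
  show iotaSet l v.1 = _
  rw [hset, iotaSet_gamma hμ]

variable {Λ}

theorem can_iota_surj (hls : LambdaSync Λ) (l : ℕ) :
    Function.Surjective (fun v : CanV Λ (l + 1) => canIota Λ v) := by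
  intro T
  obtain ⟨μ, hμ, hset⟩ := T.2
  obtain ⟨ν, hν, hadm, hsync⟩ := hls.sync_ext hμ.adm (l + 1)
  refine ⟨⟨Gamma Λ (l + 1) (μ ++ ν), ⟨μ ++ ν, hsync, rfl⟩⟩, ?_⟩
  apply Subtype.ext
  erw [canIota_gamma Λ _ hsync.adm rfl, hset, hμ.gamma_ext hadm]

theorem can_succ (hls : LambdaSync Λ) (l : ℕ) (v : CanV Λ l) :
    ∃ e : CanE Λ l, canSrc Λ e = v := by
  obtain ⟨μ, hμ, hset⟩ := v.2
  match μ, hμ, hset with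
  | [], hμ, hset =>
    obtain ⟨a, ha⟩ := hμ.adm.left_ext1
    obtain ⟨ν, hν, hadm, hsync⟩ := hls.sync_ext (η := [a]) ha (l + 1)
    have hν'' : LSync Λ (l + 1) ν := hν.mono (by simp)
    have hadm' : Adm Λ (a :: ν) := by simpa using hsync.adm
    refine ⟨⟨(a, ⟨Gamma Λ (l + 1) ν, ⟨ν, hν'', rfl⟩⟩), ⟨ν, hν'', rfl, hadm'⟩⟩, ?_⟩
    apply Subtype.ext
    erw [canSrc_gamma Λ _ rfl, hset]
    have := hμ.gamma_ext (ω := a :: ν) (by simpa using hadm')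
    simpa using this.symm
  | α :: t, hμ, hset =>
    obtain ⟨ν, hν, hadm, hsync⟩ := hls.sync_ext hμ.adm (l + 1)
    have hadm2 : Adm Λ (α :: (t ++ ν)) := by rwa [List.cons_append] at hadm
    have hadm' : Adm Λ (t ++ ν) := hadm2.of_cons
    have htν : LSync Λ (l + 1) (t ++ ν) := by
      have h2 := hν.prepend (ρ := t) hadm'
        (by simp only [List.length_cons]; omega)
      have h3 : (α :: t).length + (l + 1) - t.length = (l + 1) + 1 := by
        simp only [List.length_cons]; omega
      rw [h3] at h2
      exact h2.mono_one
    refine ⟨⟨(α, ⟨Gamma Λ (l + 1) (t ++ ν), ⟨t ++ ν, htν, rfl⟩⟩), ⟨t ++ ν, htν, rfl, hadm2⟩⟩, ?_⟩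
    apply Subtype.ext
    erw [canSrc_gamma Λ _ rfl, hset, hμ.gamma_ext hadm, List.cons_append]

theorem can_pred (l : ℕ) (v : CanV Λ (l + 1)) :
    ∃ e : CanE Λ l, e.1.2 = v := by
  obtain ⟨ν, hν, hset⟩ := v.2
  obtain ⟨a, ha⟩ := hν.adm.left_ext1
  exact ⟨⟨(a, v), ⟨ν, hν, hset, ha⟩⟩, rfl⟩

theorem can_local (l : ℕ) (u : CanV Λ l) (v : CanV Λ (l + 2)) (α : A) :
    Nat.card {e : CanE Λ (l + 1) //
        e.1.2 = v ∧ canIota Λ (canSrc Λ e) = u ∧ e.1.1 = α}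
      = Nat.card {e : CanE Λ l //
        canSrc Λ e = u ∧ e.1.2 = canIota Λ v ∧ e.1.1 = α} := by
  obtain ⟨ν, hν, hsetv⟩ := v.2
  apply card_helper
  · rintro ⟨e, he1, he2, he3⟩ ⟨f, hf1, hf2, hf3⟩
    apply Subtype.ext
    apply Subtype.ext
    exact Prod.ext_iff.mpr ⟨he3.trans hf3.symm, he1.trans hf1.symm⟩
  · rintro ⟨e, he1, he2, he3⟩ ⟨f, hf1, hf2, hf3⟩
    apply Subtype.ext
    apply Subtype.ext
    exact Prod.ext_iff.mpr ⟨he3.trans hf3.symm, he2.trans hf2.symm⟩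
  · constructor
    · rintro ⟨⟨e, he1, he2, he3⟩⟩
      obtain ⟨ν₁, hν₁, hset₁, hadm₁⟩ := e.2
      subst he3
      have hv1 : v.1 = Gamma Λ (l + 2) ν₁ := by rw [← he1]; exact hset₁
      have hio : (canIota Λ v).1 = Gamma Λ (l + 1) ν₁ := canIota_gamma Λ v hν₁.adm hv1
      refine ⟨⟨⟨(e.1.1, canIota Λ v), ⟨ν₁, hν₁.mono_one, hio, hadm₁⟩⟩, ?_, rfl, rfl⟩⟩
      apply Subtype.ext
      erw [canSrc_gamma Λ _ hio]
      rw [← he2]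
      have hsrce : (canSrc Λ e).1 = Gamma Λ (l + 1) (e.1.1 :: ν₁) := canSrc_gamma Λ e hset₁
      rw [canIota_gamma Λ _ hadm₁ hsrce]
    · rintro ⟨⟨f, hf1, hf2, hf3⟩⟩
      obtain ⟨ν₂, hν₂, hset₂, hadm₂⟩ := f.2
      subst hf3
      have hioν : (canIota Λ v).1 = Gamma Λ (l + 1) ν := canIota_gamma Λ v hν.adm hsetv
      have hgg : Gamma Λ (l + 1) ν = Gamma Λ (l + 1) ν₂ := by
        rw [← hioν, ← hset₂, hf2]
      have hadmν : Adm Λ (f.1.1 :: ν) := adm_cons_of_gamma_eq hgg.symm hadm₂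
      refine ⟨⟨⟨(f.1.1, v), ⟨ν, hν, hsetv, hadmν⟩⟩, rfl, ?_, rfl⟩⟩
      apply Subtype.ext
      have hsrce : (canSrc Λ (⟨(f.1.1, v), ⟨ν, hν, hsetv, hadmν⟩⟩ : CanE Λ (l + 1))).1
          = Gamma Λ (l + 1) (f.1.1 :: ν) := canSrc_gamma Λ _ hsetv
      rw [canIota_gamma Λ _ hadmν hsrce]
      rw [← hf1, canSrc_gamma Λ f hset₂]
      exact gamma_cons_of_gamma_eq hgg f.1.1

end CanonicalDef
namespace LGS

variable {A : Type*} {G : LGS A}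

theorem pathW_nil (l : ℕ) (v : G.V l) : G.PathW l v [] l v := ⟨rfl, rfl⟩

/-- cast a vertex along a level equality -/
def vcast (G : LGS A) {l l' : ℕ} (h : l = l') (v : G.V l) : G.V l' := h ▸ v

theorem pathW_cast {l1 l1' l2 l2' : ℕ} (h1 : l1 = l1') (h2 : l2 = l2') {v : G.V l1}
    {u : G.V l2} {w : List A} (hp : G.PathW l1 v w l2 u) :
    G.PathW l1' (G.vcast h1 v) w l2' (G.vcast h2 u) := by
  subst h1; subst h2; exact hp

theorem leaves_cast {l l' : ℕ} (h : l = l') {v : G.V l} {w : List A}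
    (hv : G.Leaves l v w) : G.Leaves l' (G.vcast h v) w := by
  subst h; exact hv

theorem pathW_level : ∀ (w : List A) {l : ℕ} {v : G.V l} {l' : ℕ} {u : G.V l'},
    G.PathW l v w l' u → l' = l + w.length := by
  intro w
  induction w with
  | nil => rintro l v l' u ⟨h, _⟩; simpa using h.symm
  | cons a w ih =>
    rintro l v l' u ⟨e, _, _, hp⟩
    have := ih hp
    simp only [List.length_cons]
    omega

theorem pathW_append : ∀ (w1 : List A) {w2 : List A} {l : ℕ} {v : G.V l} {l' : ℕ}
    {u : G.V l'} {l'' : ℕ} {t : G.V l''},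
    G.PathW l v w1 l' u → G.PathW l' u w2 l'' t → G.PathW l v (w1 ++ w2) l'' t := by
  intro w1
  induction w1 with
  | nil =>
    intro w2 l v l' u l'' t h1 h2
    obtain ⟨h, hv⟩ := h1
    subst h
    have hv' : v = u := hv
    subst hv'
    exact h2
  | cons a w ih =>
    rintro w2 l v l' u l'' t ⟨e, hs, hl, hp⟩ h2
    exact ⟨e, hs, hl, ih hp h2⟩

theorem pathW_split : ∀ (w1 : List A) {w2 : List A} {l : ℕ} {v : G.V l} {l'' : ℕ}
    {t : G.V l''}, G.PathW l v (w1 ++ w2) l'' t →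
    ∃ (m : ℕ) (u : G.V m), G.PathW l v w1 m u ∧ G.PathW m u w2 l'' t := by
  intro w1
  induction w1 with
  | nil => intro w2 l v l'' t h; exact ⟨l, v, pathW_nil l v, h⟩
  | cons a w ih =>
    rintro w2 l v l'' t ⟨e, hs, hl, hp⟩
    obtain ⟨m, u, h1, h2⟩ := ih hp
    exact ⟨m, u, ⟨e, hs, hl, h1⟩, h2⟩

theorem path_unique (hlr : G.LeftResolving) : ∀ (w : List A) {l : ℕ} {v v' : G.V l}
    {l' : ℕ} {u : G.V l'}, G.PathW l v w l' u → G.PathW l v' w l' u → v = v' := by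
  intro w
  induction w with
  | nil =>
    intro l v v' l' u h1 h2
    obtain ⟨h, hv⟩ := h1
    subst h
    obtain ⟨_, hv'⟩ := h2
    have e1 : v = u := hv
    have e2 : v' = u := hv'
    rw [e1, e2]
  | cons a w ih =>
    rintro l v v' l' u ⟨e, hs, hl, hp⟩ ⟨e', hs', hl', hp'⟩
    have htgt : G.tgt l e = G.tgt l e' := ih hp hp'
    have : e = e' := hlr l e e' (hl.trans hl'.symm) htgt
    rw [← hs, ← hs', this]

theorem edge_down {l : ℕ} (e : G.E (l + 1)) :
    ∃ f : G.E l, G.src l f = G.iota l (G.src (l + 1) e) ∧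
      G.tgt l f = G.iota (l + 1) (G.tgt (l + 1) e) ∧ G.lab l f = G.lab (l + 1) e := by
  have h := G.local_property l (G.iota l (G.src (l + 1) e)) (G.tgt (l + 1) e)
    (G.lab (l + 1) e)
  have hne : Nat.card {e' : G.E (l + 1) // G.tgt (l + 1) e' = G.tgt (l + 1) e ∧
      G.iota l (G.src (l + 1) e') = G.iota l (G.src (l + 1) e) ∧
      G.lab (l + 1) e' = G.lab (l + 1) e} ≠ 0 := by
    rw [Nat.card_ne_zero]
    haveI := G.finE (l + 1)
    exact ⟨⟨⟨e, rfl, rfl, rfl⟩⟩, inferInstance⟩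
  rw [h] at hne
  obtain ⟨⟨⟨f, h1, h2, h3⟩⟩, -⟩ := Nat.card_ne_zero.mp hne
  exact ⟨f, h1, h2, h3⟩

theorem edge_up {l : ℕ} (f : G.E l) (vhat : G.V (l + 2))
    (hv : G.iota (l + 1) vhat = G.tgt l f) :
    ∃ e : G.E (l + 1), G.tgt (l + 1) e = vhat ∧
      G.iota l (G.src (l + 1) e) = G.src l f ∧ G.lab (l + 1) e = G.lab l f := by
  have h := G.local_property l (G.src l f) vhat (G.lab l f)
  have hne : Nat.card {e' : G.E l // G.src l e' = G.src l f ∧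
      G.tgt l e' = G.iota (l + 1) vhat ∧ G.lab l e' = G.lab l f} ≠ 0 := by
    rw [Nat.card_ne_zero]
    haveI := G.finE l
    exact ⟨⟨⟨f, rfl, hv.symm, rfl⟩⟩, inferInstance⟩
  rw [← h] at hne
  obtain ⟨⟨⟨e, h1, h2, h3⟩⟩, -⟩ := Nat.card_ne_zero.mp hne
  exact ⟨e, h1, h2, h3⟩

theorem path_down : ∀ (w : List A) {l : ℕ} {v : G.V (l + 1)} {l' : ℕ} {u : G.V (l' + 1)},
    G.PathW (l + 1) v w (l' + 1) u → G.PathW l (G.iota l v) w l' (G.iota l' u) := by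
  intro w
  induction w with
  | nil =>
    rintro l v l' u ⟨h, hv⟩
    have hll : l = l' := by omega
    subst hll
    have hv' : v = u := hv
    subst hv'
    exact ⟨rfl, rfl⟩
  | cons a w ih =>
    rintro l v l' u ⟨e, hs, hl, hp⟩
    obtain ⟨f, hf1, hf2, hf3⟩ := edge_down e
    refine ⟨f, ?_, hf3.trans hl, ?_⟩
    · rw [hf1, hs]
    · have := ih hp
      rwa [← hf2] at this

theorem path_up : ∀ (w : List A) {l : ℕ} {p : G.V l} {l' : ℕ} {q : G.V l'},
    G.PathW l p w l' q → ∀ qhat : G.V (l' + 1), G.iota l' qhat = q →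
    ∃ phat : G.V (l + 1), G.iota l phat = p ∧ G.PathW (l + 1) phat w (l' + 1) qhat := by
  intro w
  induction w with
  | nil =>
    rintro l p l' q ⟨h, hv⟩ qhat hq
    subst h
    have hv' : p = q := hv
    subst hv'
    exact ⟨qhat, hq, pathW_nil _ _⟩
  | cons a w ih =>
    rintro l p l' q ⟨e, hs, hl, hp⟩ qhat hq
    obtain ⟨rhat, hr, hp2⟩ := ih hp qhat hq
    obtain ⟨ehat, he1, he2, he3⟩ := edge_up e rhat hr
    refine ⟨G.src (l + 1) ehat, by rw [he2, hs], ehat, rfl, he3.trans hl, ?_⟩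
    rwa [he1]

theorem leaves_down {l : ℕ} {v : G.V (l + 1)} {z : List A} (h : G.Leaves (l + 1) v z) :
    G.Leaves l (G.iota l v) z := by
  obtain ⟨l', u, hp⟩ := h
  have hl' := pathW_level z hp
  have h2 : l' = (l + z.length) + 1 := by omega
  have hp' := pathW_cast rfl h2 hp
  exact ⟨l + z.length, G.iota _ (G.vcast h2 u), path_down z hp'⟩

theorem leaves_le : ∀ {m l : ℕ}, l ≤ m → ∀ {v : G.V m} {z : List A},
    G.Leaves m v z → ∃ v' : G.V l, G.Leaves l v' z := by
  intro m
  induction m with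
  | zero =>
    intro l hl v z hv
    obtain rfl : l = 0 := by omega
    exact ⟨v, hv⟩
  | succ k ih =>
    intro l hl v z hv
    rcases Nat.eq_or_lt_of_le hl with rfl | hlt
    · exact ⟨v, hv⟩
    · exact ih (by omega) (leaves_down hv)

theorem leaves_ge : ∀ (d : ℕ) {m : ℕ} {v : G.V m} {z : List A},
    G.Leaves m v z → ∃ v' : G.V (m + d), G.Leaves (m + d) v' z := by
  intro d
  induction d with
  | zero => intro m v z hv; exact ⟨v, hv⟩
  | succ k ih =>
    intro m v z hv
    obtain ⟨v', hv'⟩ := ih hv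
    obtain ⟨l', u, hp⟩ := hv'
    obtain ⟨qhat, hq⟩ := G.iota_surj l' u
    obtain ⟨phat, _, hp2⟩ := path_up z hp qhat hq
    exact ⟨phat, _, _, hp2⟩

theorem exists_leaves_at {Λ : Set (ℤ → A)} (hpres : G.Presents Λ) {z : List A}
    (hz : Adm Λ z) (l : ℕ) : ∃ p : G.V l, G.Leaves l p z := by
  obtain ⟨m, v, m', u, hp⟩ := (hpres z).mp hz
  have hv : G.Leaves m v z := ⟨m', u, hp⟩
  rcases le_or_gt l m with h | h
  · exact leaves_le h hv
  · obtain ⟨v', hv'⟩ := leaves_ge (l - m) hv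
    have hm : m + (l - m) = l := by omega
    exact ⟨G.vcast hm v', leaves_cast hm hv'⟩

theorem leaves_prefix {l : ℕ} {v : G.V l} {w1 w2 : List A}
    (h : G.Leaves l v (w1 ++ w2)) : G.Leaves l v w1 := by
  obtain ⟨l', u, hp⟩ := h
  obtain ⟨m, p, h1, _⟩ := pathW_split w1 hp
  exact ⟨m, p, h1⟩

end LGS
section CanonicalProperties

variable {A : Type*} [Finite A] {Λ : Set (ℤ → A)} (hls : LambdaSync Λ)

/-- the canonical λ-synchronizing λ-graph system `𝔏^{λ(Λ)}` -/
def canLGS : LGS A where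
  V := CanV Λ
  E := CanE Λ
  finV := finite_CanV Λ
  finE := finite_CanE Λ
  src _ e := canSrc Λ e
  tgt _ e := e.1.2
  lab _ e := e.1.1
  iota _ v := canIota Λ v
  iota_surj := can_iota_surj hls
  succ := can_succ hls
  pred := fun l v => can_pred l v
  local_property := fun l u v α => can_local l u v α

theorem can_path : ∀ (w : List A) {l m : ℕ} (hm : m = l + w.length) (v : CanV Λ l)
    (ν : List A) (hν : LSync Λ m ν) (hadm : Adm Λ (w ++ ν)) (hv : v.1 = Gamma Λ l (w ++ ν)),
    ∃ u : CanV Λ m, u.1 = Gamma Λ m ν ∧ (canLGS hls).PathW l v w m u := by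
  intro w
  induction w with
  | nil =>
    intro l m hm v ν hν hadm hv
    obtain rfl : m = l := by simpa using hm
    exact ⟨v, by simpa using hv, ⟨rfl, rfl⟩⟩
  | cons a w ih =>
    intro l m hm v ν hν hadm hv
    simp only [List.length_cons] at hm
    have hm' : m = (l + 1) + w.length := by omega
    have hadm2 : Adm Λ (a :: (w ++ ν)) := by rwa [List.cons_append] at hadm
    have hsync' : LSync Λ (l + 1) (w ++ ν) := by
      have h2 := hν.prepend (ρ := w) hadm2.of_cons (by omega)
      have h3 : m - w.length = l + 1 := by omega
      rwa [h3] at h2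
    obtain ⟨u, hu, hp⟩ := ih hm' ⟨Gamma Λ (l + 1) (w ++ ν), ⟨w ++ ν, hsync', rfl⟩⟩
      ν hν hadm2.of_cons rfl
    refine ⟨u, hu, ⟨⟨(a, ⟨Gamma Λ (l + 1) (w ++ ν), ⟨w ++ ν, hsync', rfl⟩⟩),
      ⟨w ++ ν, hsync', rfl, hadm2⟩⟩, Subtype.ext ?_, rfl, hp⟩⟩
    exact (canSrc_gamma Λ _ rfl).trans hv.symm

theorem can_path_src : ∀ (w : List A) {l : ℕ} {v : CanV Λ l} {m : ℕ} {u : CanV Λ m},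
    (canLGS hls).PathW l v w m u → ∀ (ν : List A), LSync Λ m ν → u.1 = Gamma Λ m ν →
    Adm Λ (w ++ ν) ∧ v.1 = Gamma Λ l (w ++ ν) := by
  intro w
  induction w with
  | nil =>
    rintro l v m u ⟨h, hv⟩ ν hν hu
    subst h
    have hv' : v = u := hv
    subst hv'
    exact ⟨by simpa using hν.adm, by simpa using hu⟩
  | cons a w ih =>
    rintro l v m u ⟨e, hs, hl, hp⟩ ν hν hu
    obtain ⟨hadm', hset'⟩ := ih hp ν hν hu
    obtain ⟨ν₀, hν₀, hset₀, hadm₀⟩ := e.2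
    have hgg : Gamma Λ (l + 1) ν₀ = Gamma Λ (l + 1) (w ++ ν) := by
      rw [← hset₀]; exact hset'
    have hadm2 : Adm Λ (e.1.1 :: (w ++ ν)) := adm_cons_of_gamma_eq hgg hadm₀
    constructor
    · rw [List.cons_append, ← hl]
      exact hadm2
    · rw [← hs]
      show (canSrc Λ e).1 = _
      rw [canSrc_gamma Λ e hset']
      have hl' : e.1.1 = a := hl
      rw [hl', List.cons_append]

theorem can_presents : (canLGS hls).Presents Λ := by
  intro w
  constructor
  · intro hadm
    obtain ⟨ν, hν, hadm2, hsync0⟩ := hls.sync_ext hadm 0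
    have hν' : LSync Λ w.length ν := by simpa using hν
    obtain ⟨u, hu, hp⟩ := can_path hls w (l := 0) (m := w.length) (by omega)
      ⟨Gamma Λ 0 (w ++ ν), ⟨w ++ ν, hsync0, rfl⟩⟩ ν hν' hadm2 rfl
    exact ⟨0, _, w.length, u, hp⟩
  · rintro ⟨l, v, l', u, hp⟩
    obtain ⟨ν, hν, hset⟩ := u.2
    exact (can_path_src hls w hp ν hν hset).1.append_left

theorem can_leftres : (canLGS hls).LeftResolving := by
  intro l e f hlab htgt
  apply Subtype.ext
  exact Prod.ext_iff.mpr ⟨hlab, htgt⟩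

theorem can_predset (l : ℕ) (v : CanV Λ l) : (canLGS hls).PredSet l v = v.1 := by
  obtain ⟨μ, hμ, hset⟩ := v.2
  ext w
  constructor
  · rintro ⟨hlen, v0, hp⟩
    obtain ⟨hadm, _⟩ := can_path_src hls w hp μ hμ hset
    rw [hset]
    exact ⟨hlen, hadm.append_left, hadm⟩
  · intro hw
    rw [hset] at hw
    obtain ⟨hlen, hadm, hcat⟩ := hw
    have hsync0 : LSync Λ 0 (w ++ μ) := by
      have h2 := hμ.prepend hcat (by omega)
      have h3 : l - w.length = 0 := by omega
      rwa [h3] at h2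
    obtain ⟨u, hu, hp⟩ := can_path hls w (l := 0) (m := l) (by omega)
      ⟨Gamma Λ 0 (w ++ μ), ⟨w ++ μ, hsync0, rfl⟩⟩ μ hμ hcat rfl
    have huv : u = v := Subtype.ext (by rw [hu, hset])
    exact ⟨hlen, _, huv ▸ hp⟩

theorem can_predsep : (canLGS hls).PredSeparated := by
  intro l u v h
  apply Subtype.ext
  rw [← can_predset hls l u, ← can_predset hls l v, h]

theorem can_iotaN : ∀ (n l : ℕ) (v : CanV Λ (l + n)) (μ : List A), Adm Λ μ →
    v.1 = Gamma Λ (l + n) μ → ((canLGS hls).iotaN l n v).1 = Gamma Λ l μ := by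
  intro n
  induction n with
  | zero => intro l v μ _ hset; exact hset
  | succ k ih =>
    intro l v μ hadm hset
    exact ih l (canIota Λ v) μ hadm (canIota_gamma Λ v hadm hset)

theorem can_syncsys : (canLGS hls).LambdaSyncSys := by
  intro l v
  obtain ⟨μ, hμ, hset⟩ := v.2
  refine ⟨μ, ?_, ?_⟩
  · obtain ⟨ν, hν, hadm, _⟩ := hls.sync_ext hμ.adm l
    have hν' : LSync Λ (l + μ.length) ν := by
      have h4 : μ.length + l = l + μ.length := by omega
      rwa [h4] at hν
    obtain ⟨u, _, hp⟩ := can_path hls μ (l := l) (m := l + μ.length) rfl v ν hν' hadm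
      (by rw [hset, hμ.gamma_ext hadm])
    exact ⟨_, u, hp⟩
  · rintro v' ⟨l', u, hp⟩
    obtain ⟨ν', hν'', hset'⟩ := u.2
    obtain ⟨hadm', hv'⟩ := can_path_src hls μ hp ν' hν'' hset'
    apply Subtype.ext
    rw [hv', hset, hμ.gamma_ext hadm']

theorem can_iotairred : (canLGS hls).IotaIrred := by
  intro l v u w l' t hp
  obtain ⟨μ, hμ, hsetv⟩ := v.2
  obtain ⟨σ, hσ, hsett⟩ := t.2
  have hl' : l' = l + w.length := LGS.pathW_level w hp
  obtain ⟨hadmχ, hsetu⟩ := can_path_src hls w hp σ hσ hsett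
  have hχ : LSync Λ l (w ++ σ) := by
    have h2 := hσ.prepend (ρ := w) hadmχ (by omega)
    have h3 : l' - w.length = l := by omega
    rwa [h3] at h2
  obtain ⟨ζ, hζ⟩ := hls.1 μ (w ++ σ) hμ.adm hχ.adm
  have hηk : (μ ++ ζ ++ (w ++ σ)).length ≤ (w ++ σ).length + l + (μ.length + ζ.length) := by
    simp only [List.length_append]; omega
  obtain ⟨ν, hνk, hην⟩ := hls.2 (μ ++ ζ ++ (w ++ σ))
    ((w ++ σ).length + l + (μ.length + ζ.length)) hζ hηk
  have hadmall : Adm Λ ((μ ++ ζ ++ (w ++ σ)) ++ ν) := hην.adm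
  have hass1 : (μ ++ ζ ++ (w ++ σ)) ++ ν = (μ ++ ζ) ++ ((w ++ σ) ++ ν) := by
    simp [List.append_assoc]
  have hadm_ξρ : Adm Λ ((μ ++ ζ) ++ ((w ++ σ) ++ ν)) := by
    rw [← hass1]; exact hadmall
  have hadm_χν : Adm Λ ((w ++ σ) ++ ν) := hadm_ξρ.append_right
  have hρ : LSync Λ (l + (μ.length + ζ.length)) ((w ++ σ) ++ ν) := by
    have h2 := hνk.prepend (ρ := w ++ σ) hadm_χν (by omega)
    have h3 : (w ++ σ).length + l + (μ.length + ζ.length) - (w ++ σ).length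
        = l + (μ.length + ζ.length) := by omega
    rwa [h3] at h2
  have hvset : v.1 = Gamma Λ l ((μ ++ ζ) ++ ((w ++ σ) ++ ν)) := by
    rw [hsetv, hμ.gamma_ext (ω := ζ ++ ((w ++ σ) ++ ν))
      (by rw [← List.append_assoc]; exact hadm_ξρ), ← List.append_assoc]
  obtain ⟨u', hu', hpξ⟩ := can_path hls (μ ++ ζ) (l := l)
    (m := l + (μ.length + ζ.length)) (by rw [List.length_append]) v
    ((w ++ σ) ++ ν) hρ hadm_ξρ hvset
  have hass2 : (μ ++ ζ ++ (w ++ σ)) ++ ν = (μ ++ ζ ++ w) ++ (σ ++ ν) := by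
    simp [List.append_assoc]
  have hadm_σν : Adm Λ (σ ++ ν) := by
    have h5 : Adm Λ ((μ ++ ζ ++ w) ++ (σ ++ ν)) := by rw [← hass2]; exact hadmall
    exact h5.append_right
  have hσν : LSync Λ (l' + (μ.length + ζ.length)) (σ ++ ν) := by
    have h2 := hνk.prepend (ρ := σ) hadm_σν (by simp only [List.length_append]; omega)
    have h3 : (w ++ σ).length + l + (μ.length + ζ.length) - σ.length
        = l' + (μ.length + ζ.length) := by simp only [List.length_append]; omega
    rwa [h3] at h2
  have hu'set : u'.1 = Gamma Λ (l + (μ.length + ζ.length)) (w ++ (σ ++ ν)) := by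
    rw [hu', List.append_assoc]
  obtain ⟨t', ht', hpw⟩ := can_path hls w (l := l + (μ.length + ζ.length))
    (m := l' + (μ.length + ζ.length)) (by omega) u' (σ ++ ν) hσν
    (by rw [← List.append_assoc]; exact hadm_χν) hu'set
  refine ⟨μ.length + ζ.length, μ ++ ζ, u', t', hpξ, ?_, hpw, ?_⟩
  · apply Subtype.ext
    rw [can_iotaN hls _ l u' ((w ++ σ) ++ ν) hadm_χν hu', hsetu, hχ.gamma_ext hadm_χν]
  · apply Subtype.ext
    rw [can_iotaN hls _ l' t' (σ ++ ν) hadm_σν ht', hsett, hσ.gamma_ext hadm_σν]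

theorem can_props : (canLGS hls).CanonicalProps Λ :=
  ⟨can_presents hls, can_leftres hls, can_predsep hls, can_iotairred hls, can_syncsys hls⟩

end CanonicalProperties
section Uniqueness

open LGS

variable {A : Type*} [Finite A] {Λ : Set (ℤ → A)} {G : LGS A}

theorem adm_of_leaves (hpres : G.Presents Λ) {l : ℕ} {v : G.V l} {z : List A}
    (h : G.Leaves l v z) : Adm Λ z := by
  obtain ⟨l2, q, hp⟩ := h
  exact (hpres z).mpr ⟨l, v, l2, q, hp⟩

theorem launch_predset (hpres : G.Presents Λ) {l : ℕ} {v : G.V l} {z : List A}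
    (hz : G.Launches l v z) : G.PredSet l v = Gamma Λ l z := by
  ext w
  constructor
  · rintro ⟨hlen, v0, hp⟩
    obtain ⟨l2, q, hq⟩ := hz.1
    refine ⟨hlen, (hpres w).mpr ⟨0, v0, l, v, hp⟩, ?_⟩
    exact (hpres (w ++ z)).mpr ⟨0, v0, l2, q, pathW_append w hp hq⟩
  · rintro ⟨hlen, hadm, hcat⟩
    obtain ⟨p0, hlv⟩ := exists_leaves_at hpres hcat 0
    obtain ⟨l2, q, hp⟩ := hlv
    obtain ⟨m, u, h1, h2⟩ := pathW_split w hp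
    have hm : m = l := by have := pathW_level w h1; omega
    have hleaves : G.Leaves l (G.vcast hm u) z := leaves_cast hm ⟨l2, q, h2⟩
    have hp1 : G.PathW 0 p0 w l (G.vcast hm u) := pathW_cast rfl hm h1
    exact ⟨hlen, p0, (hz.2 _ hleaves) ▸ hp1⟩

theorem launches_ext (hpres : G.Presents Λ) {l : ℕ} {v : G.V l} {z ω : List A}
    (hz : G.Launches l v z) (hω : Adm Λ (z ++ ω)) : G.Launches l v (z ++ ω) := by
  obtain ⟨p, hp⟩ := exists_leaves_at hpres hω l
  have hpv : p = v := hz.2 p (leaves_prefix hp)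
  subst hpv
  exact ⟨hp, fun v' hv' => hz.2 v' (leaves_prefix hv')⟩

theorem launch_sync (hpres : G.Presents Λ) {l : ℕ} {v : G.V l} {z : List A}
    (hz : G.Launches l v z) : LSync Λ l z := by
  refine ⟨adm_of_leaves hpres hz.1, fun ω hω => ?_⟩
  rw [← launch_predset hpres hz, ← launch_predset hpres (launches_ext hpres hz hω)]

theorem launches_of_leaves (hpres : G.Presents Λ) (hlr : G.LeftResolving)
    (hsync : G.LambdaSyncSys) {l : ℕ} {p : G.V l} {μ : List A}
    (hleaves : G.Leaves l p μ) : ∃ ω : List A, G.Launches l p (μ ++ ω) := by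
  obtain ⟨l2, q, hp⟩ := hleaves
  obtain ⟨w1, hw1⟩ := hsync l2 q
  refine ⟨w1, ⟨?_, ?_⟩⟩
  · obtain ⟨l3, s, hq⟩ := hw1.1
    exact ⟨l3, s, pathW_append μ hp hq⟩
  · rintro p' ⟨l4, s', hp'⟩
    obtain ⟨m, q', h1, h2⟩ := pathW_split μ hp'
    have hm : m = l2 := by
      have e1 := pathW_level μ hp
      have e2 := pathW_level μ h1
      omega
    have hq' : G.Leaves l2 (G.vcast hm q') w1 := leaves_cast hm ⟨l4, s', h2⟩
    have hqq : G.vcast hm q' = q := hw1.2 _ hq'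
    have h1' : G.PathW l p' μ l2 (G.vcast hm q') := pathW_cast rfl hm h1
    rw [hqq] at h1'
    exact path_unique hlr μ h1' hp

/-- the chosen launching word of a vertex -/
noncomputable def wOf (hG : G.CanonicalProps Λ) (l : ℕ) (v : G.V l) : List A :=
  (hG.2.2.2.2 l v).choose

theorem wOf_spec (hG : G.CanonicalProps Λ) (l : ℕ) (v : G.V l) :
    G.Launches l v (wOf hG l v) := (hG.2.2.2.2 l v).choose_spec

/-- the vertex map of the isomorphism onto the canonical system -/
noncomputable def phiV (hG : G.CanonicalProps Λ) (l : ℕ) (v : G.V l) : CanV Λ l :=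
  ⟨G.PredSet l v, wOf hG l v, launch_sync hG.1 (wOf_spec hG l v),
    launch_predset hG.1 (wOf_spec hG l v)⟩

theorem phiV_inj (hG : G.CanonicalProps Λ) (l : ℕ) : Function.Injective (phiV hG l) :=
  fun v v' h => hG.2.2.1 l v v' (congrArg Subtype.val h)

theorem phiV_surj (hG : G.CanonicalProps Λ) (l : ℕ) : Function.Surjective (phiV hG l) := by
  intro T
  obtain ⟨μ, hμ, hset⟩ := T.2
  obtain ⟨p, hpμ⟩ := exists_leaves_at hG.1 hμ.adm l
  obtain ⟨ω, hlaunch⟩ := launches_of_leaves hG.1 hG.2.1 hG.2.2.2.2 hpμ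
  refine ⟨p, Subtype.ext ?_⟩
  show G.PredSet l p = T.1
  rw [launch_predset hG.1 hlaunch, hset]
  exact (hμ.gamma_ext (adm_of_leaves hG.1 hlaunch.1)).symm

theorem phiV_iota (hG : G.CanonicalProps Λ) (l : ℕ) (v : G.V (l + 1)) :
    canIota Λ (phiV hG (l + 1) v) = phiV hG l (G.iota l v) := by
  apply Subtype.ext
  show iotaSet l (G.PredSet (l + 1) v) = G.PredSet l (G.iota l v)
  ext ξ
  constructor
  · rintro ⟨hlen, a, ⟨hlen2, v0, hp⟩⟩
    obtain ⟨e, hs, hl, hp'⟩ := hp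
    exact ⟨hlen, G.iota 0 (G.tgt 0 e), path_down ξ hp'⟩
  · rintro ⟨hlen, v0, hp⟩
    obtain ⟨phat, hι, hp2⟩ := path_up ξ hp v rfl
    obtain ⟨e0, he0⟩ := G.pred 0 phat
    refine ⟨hlen, G.lab 0 e0, ⟨by simp [hlen], G.src 0 e0, ⟨e0, rfl, rfl, ?_⟩⟩⟩
    rw [he0]
    exact hp2

theorem adm_lab_wOf (hG : G.CanonicalProps Λ) (l : ℕ) (e : G.E l) :
    Adm Λ (G.lab l e :: wOf hG (l + 1) (G.tgt l e)) := by
  obtain ⟨l2, q, hp⟩ := (wOf_spec hG (l + 1) (G.tgt l e)).1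
  exact (hG.1 _).mpr ⟨l, G.src l e, l2, q, ⟨e, rfl, rfl, hp⟩⟩

/-- the edge map of the isomorphism onto the canonical system -/
noncomputable def phiE (hG : G.CanonicalProps Λ) (l : ℕ) (e : G.E l) : CanE Λ l :=
  ⟨(G.lab l e, phiV hG (l + 1) (G.tgt l e)),
    wOf hG (l + 1) (G.tgt l e), launch_sync hG.1 (wOf_spec hG (l + 1) (G.tgt l e)),
    launch_predset hG.1 (wOf_spec hG (l + 1) (G.tgt l e)), adm_lab_wOf hG l e⟩

theorem phiE_inj (hG : G.CanonicalProps Λ) (l : ℕ) : Function.Injective (phiE hG l) := by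
  intro e f h
  have h1 : G.lab l e = G.lab l f := congrArg (fun x => x.1.1) h
  have h2 : phiV hG (l + 1) (G.tgt l e) = phiV hG (l + 1) (G.tgt l f) :=
    congrArg (fun x => x.1.2) h
  exact hG.2.1 l e f h1 (phiV_inj hG (l + 1) h2)

theorem phiE_surj (hG : G.CanonicalProps Λ) (l : ℕ) : Function.Surjective (phiE hG l) := by
  intro ε
  obtain ⟨ν, hν, hsetν, hadmαν⟩ := ε.2
  obtain ⟨p, hpl⟩ := exists_leaves_at hG.1 hadmαν l
  obtain ⟨l2, s, hp⟩ := hpl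
  obtain ⟨e, hs, hl, hp'⟩ := hp
  obtain ⟨ω, hlaunch⟩ := launches_of_leaves hG.1 hG.2.1 hG.2.2.2.2 ⟨l2, s, hp'⟩
  have hpred : G.PredSet (l + 1) (G.tgt l e) = Gamma Λ (l + 1) ν := by
    rw [launch_predset hG.1 hlaunch, ← hν.gamma_ext (adm_of_leaves hG.1 hlaunch.1)]
  refine ⟨e, Subtype.ext (Prod.ext_iff.mpr ⟨hl, ?_⟩)⟩
  apply Subtype.ext
  show G.PredSet (l + 1) (G.tgt l e) = (ε.1.2).1
  rw [hpred, hsetν]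

/-- any left-resolving, predecessor-separated, ι-irreducible, λ-synchronizing
λ-graph system presenting `Λ` is isomorphic to the canonical one -/
theorem iso_to_can (hG : G.CanonicalProps Λ) (hls : LambdaSync Λ) :
    G.Isomorphic (canLGS hls) := by
  refine ⟨fun l => Equiv.ofBijective (phiV hG l) ⟨phiV_inj hG l, phiV_surj hG l⟩,
    fun l => Equiv.ofBijective (phiE hG l) ⟨phiE_inj hG l, phiE_surj hG l⟩,
    ?_, ?_, ?_, ?_⟩
  · intro l e
    apply Subtype.ext
    show srcSet Λ l (G.lab l e) (G.PredSet (l + 1) (G.tgt l e)) = G.PredSet l (G.src l e)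
    ext ξ
    constructor
    · rintro ⟨hlen, hadm, hmem⟩
      obtain ⟨hlen2, v0, hp⟩ := hmem
      obtain ⟨m, p, h1, h2⟩ := pathW_split ξ hp
      obtain ⟨f, hsf, hlf, hnil⟩ := h2
      obtain ⟨hml, hvf⟩ := hnil
      have hm : m = l := by omega
      subst hm
      have htf : G.tgt m f = G.tgt m e := hvf
      have hef : f = e := hG.2.1 m f e hlf htf
      rw [← hsf, hef] at h1
      exact ⟨hlen, v0, h1⟩
    · rintro ⟨hlen, v0, hp⟩
      have hadm : Adm Λ ξ := (hG.1 ξ).mpr ⟨0, v0, l, G.src l e, hp⟩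
      refine ⟨hlen, hadm, by simp [hlen], v0, ?_⟩
      exact pathW_append ξ hp ⟨e, rfl, rfl, ⟨rfl, rfl⟩⟩
  · intro l e
    rfl
  · intro l e
    rfl
  · intro l v
    exact phiV_iota hG l v

theorem iso_symm {G' : LGS A} (h : G.Isomorphic G') : G'.Isomorphic G := by
  obtain ⟨Φv, Φe, hsrc, htgt, hlab, hiota⟩ := h
  refine ⟨fun l => (Φv l).symm, fun l => (Φe l).symm, ?_, ?_, ?_, ?_⟩
  · intro l e
    apply (Φv l).injective
    rw [Equiv.apply_symm_apply, ← hsrc l ((Φe l).symm e), Equiv.apply_symm_apply]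
  · intro l e
    apply (Φv (l + 1)).injective
    rw [Equiv.apply_symm_apply, ← htgt l ((Φe l).symm e), Equiv.apply_symm_apply]
  · intro l e
    rw [← hlab l ((Φe l).symm e), Equiv.apply_symm_apply]
  · intro l v
    apply (Φv l).injective
    rw [Equiv.apply_symm_apply, ← hiota l ((Φv (l + 1)).symm v), Equiv.apply_symm_apply]

theorem iso_trans {G' G'' : LGS A} (h : G.Isomorphic G') (h' : G'.Isomorphic G'') :
    G.Isomorphic G'' := by
  obtain ⟨Φv, Φe, hsrc, htgt, hlab, hiota⟩ := h
  obtain ⟨Ψv, Ψe, hsrc', htgt', hlab', hiota'⟩ := h'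
  refine ⟨fun l => (Φv l).trans (Ψv l), fun l => (Φe l).trans (Ψe l), ?_, ?_, ?_, ?_⟩
  · intro l e
    show G''.src l (Ψe l (Φe l e)) = Ψv l (Φv l (G.src l e))
    rw [hsrc' l (Φe l e), hsrc l e]
  · intro l e
    show G''.tgt l (Ψe l (Φe l e)) = Ψv (l + 1) (Φv (l + 1) (G.tgt l e))
    rw [htgt' l (Φe l e), htgt l e]
  · intro l e
    show G''.lab l (Ψe l (Φe l e)) = G.lab l e
    rw [hlab' l (Φe l e), hlab l e]
  · intro l v
    show G''.iota l (Ψv (l + 1) (Φv (l + 1) v)) = Ψv l (Φv l (G.iota l v))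
    rw [hiota' l (Φv (l + 1) v), hiota l v]

end Uniqueness
section Transfer

open LGS

variable {A : Type*} {Λ : Set (ℤ → A)}

theorem pathW_of_iso {H G : LGS A} (Φv : ∀ l, H.V l ≃ G.V l) (Φe : ∀ l, H.E l ≃ G.E l)
    (hsrc : ∀ (l : ℕ) (e : H.E l), G.src l (Φe l e) = Φv l (H.src l e))
    (htgt : ∀ (l : ℕ) (e : H.E l), G.tgt l (Φe l e) = Φv (l + 1) (H.tgt l e))
    (hlab : ∀ (l : ℕ) (e : H.E l), G.lab l (Φe l e) = H.lab l e) :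
    ∀ (w : List A) {l : ℕ} {v : H.V l} {l' : ℕ} {u : H.V l'},
      H.PathW l v w l' u ↔ G.PathW l (Φv l v) w l' (Φv l' u) := by
  intro w
  induction w with
  | nil =>
    intro l v l' u
    constructor
    · rintro ⟨h, hv⟩
      subst h
      have hv' : v = u := hv
      exact ⟨rfl, congrArg (Φv l) hv'⟩
    · rintro ⟨h, hv⟩
      subst h
      have hv' : Φv l v = Φv l u := hv
      exact ⟨rfl, (Φv l).injective hv'⟩
  | cons a w ih =>
    intro l v l' u
    constructor
    · rintro ⟨e, hs, hl, hp⟩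
      refine ⟨Φe l e, by rw [hsrc, hs], (hlab l e).trans hl, ?_⟩
      rw [htgt]
      exact (ih).mp hp
    · rintro ⟨eb, hs, hl, hp⟩
      refine ⟨(Φe l).symm eb, ?_, ?_, ?_⟩
      · apply (Φv l).injective
        rw [← hsrc l ((Φe l).symm eb), Equiv.apply_symm_apply]
        exact hs
      · rw [← hlab l ((Φe l).symm eb), Equiv.apply_symm_apply]
        exact hl
      · apply (ih (v := H.tgt l ((Φe l).symm eb))).mpr
        rw [← htgt l ((Φe l).symm eb), Equiv.apply_symm_apply]
        exact hp

theorem props_of_iso {H G : LGS A} (hiso : H.Isomorphic G) (hG : G.CanonicalProps Λ) :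
    H.CanonicalProps Λ := by
  obtain ⟨Φv, Φe, hsrc, htgt, hlab, hiota⟩ := hiso
  have hpw := pathW_of_iso Φv Φe hsrc htgt hlab
  have hiotaN : ∀ (n l : ℕ) (v : H.V (l + n)),
      G.iotaN l n (Φv (l + n) v) = Φv l (H.iotaN l n v) := by
    intro n
    induction n with
    | zero => intro l v; rfl
    | succ k ihn =>
      intro l v
      show G.iotaN l k (G.iota (l + k) (Φv (l + k + 1) v)) = _
      rw [hiota (l + k) v]
      exact ihn l (H.iota (l + k) v)
  have hpred : ∀ (l : ℕ) (v : H.V l), H.PredSet l v = G.PredSet l (Φv l v) := by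
    intro l v
    ext w
    constructor
    · rintro ⟨hlen, v0, hp⟩
      exact ⟨hlen, Φv 0 v0, (hpw w).mp hp⟩
    · rintro ⟨hlen, v0, hp⟩
      refine ⟨hlen, (Φv 0).symm v0, (hpw w).mpr ?_⟩
      rw [Equiv.apply_symm_apply]
      exact hp
  have hleaves : ∀ (l : ℕ) (v : H.V l) (z : List A),
      H.Leaves l v z ↔ G.Leaves l (Φv l v) z := by
    intro l v z
    constructor
    · rintro ⟨l2, q, hp⟩
      exact ⟨l2, Φv l2 q, (hpw z).mp hp⟩
    · rintro ⟨l2, q, hp⟩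
      refine ⟨l2, (Φv l2).symm q, (hpw z).mpr ?_⟩
      rw [Equiv.apply_symm_apply]
      exact hp
  obtain ⟨hpres, hlr, hps, hii, hsy⟩ := hG
  refine ⟨?_, ?_, ?_, ?_, ?_⟩
  · -- Presents
    intro w
    rw [hpres w]
    constructor
    · rintro ⟨l, v, l', u, hp⟩
      exact ⟨l, (Φv l).symm v, l', (Φv l').symm u, (hpw w).mpr (by
        rw [Equiv.apply_symm_apply, Equiv.apply_symm_apply]; exact hp)⟩
    · rintro ⟨l, v, l', u, hp⟩
      exact ⟨l, Φv l v, l', Φv l' u, (hpw w).mp hp⟩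
  · -- LeftResolving
    intro l e f hl ht
    apply (Φe l).injective
    apply hlr
    · rw [hlab, hlab]; exact hl
    · rw [htgt, htgt, ht]
  · -- PredSeparated
    intro l v v' h
    apply (Φv l).injective
    apply hps
    rw [← hpred, ← hpred, h]
  · -- IotaIrred
    intro l v u w l' t hp
    obtain ⟨n, ξ, u', t', h1, h2, h3, h4⟩ := hii l (Φv l v) (Φv l u) w l' (Φv l' t)
      ((hpw w).mp hp)
    refine ⟨n, ξ, (Φv (l + n)).symm u', (Φv (l' + n)).symm t', ?_, ?_, ?_, ?_⟩
    · exact (hpw ξ).mpr (by rw [Equiv.apply_symm_apply]; exact h1)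
    · apply (Φv l).injective
      rw [← hiotaN n l ((Φv (l + n)).symm u'), Equiv.apply_symm_apply]
      exact h2
    · exact (hpw w).mpr (by rw [Equiv.apply_symm_apply, Equiv.apply_symm_apply]; exact h3)
    · apply (Φv l').injective
      rw [← hiotaN n l' ((Φv (l' + n)).symm t'), Equiv.apply_symm_apply]
      exact h4
  · -- LambdaSyncSys
    intro l v
    obtain ⟨z, hz1, hz2⟩ := hsy l (Φv l v)
    refine ⟨z, (hleaves l v z).mpr hz1, ?_⟩
    intro v' hv'
    apply (Φv l).injective
    exact hz2 (Φv l v') ((hleaves l v' z).mp hv')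

end Transfer

section UniverseLift

universe uu vv ww u2 u3

variable {A : Type uu}

noncomputable def liftVequiv (G0 : LGS.{uu, u2, u3} A) (l : ℕ) :
    G0.V l ≃ ULift.{vv} (Fin (Nat.card (G0.V l))) :=
  haveI := G0.finV l
  (Finite.equivFin _).trans Equiv.ulift.symm

noncomputable def liftEequiv (G0 : LGS.{uu, u2, u3} A) (l : ℕ) :
    G0.E l ≃ ULift.{ww} (Fin (Nat.card (G0.E l))) :=
  haveI := G0.finE l
  (Finite.equivFin _).trans Equiv.ulift.symm

/-- a copy of a λ-graph system in prescribed universes -/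
noncomputable def liftLGS (G0 : LGS.{uu, u2, u3} A) : LGS.{uu, vv, ww} A where
  V l := ULift.{vv} (Fin (Nat.card (G0.V l)))
  E l := ULift.{ww} (Fin (Nat.card (G0.E l)))
  finV l := inferInstance
  finE l := inferInstance
  src l e := liftVequiv G0 l (G0.src l ((liftEequiv G0 l).symm e))
  tgt l e := liftVequiv G0 (l + 1) (G0.tgt l ((liftEequiv G0 l).symm e))
  lab l e := G0.lab l ((liftEequiv G0 l).symm e)
  iota l v := liftVequiv G0 l (G0.iota l ((liftVequiv G0 (l + 1)).symm v))
  iota_surj l := by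
    intro t
    obtain ⟨v0, hv⟩ := G0.iota_surj l ((liftVequiv G0 l).symm t)
    refine ⟨liftVequiv G0 (l + 1) v0, ?_⟩
    simp [hv]
  succ l v := by
    obtain ⟨e0, he⟩ := G0.succ l ((liftVequiv G0 l).symm v)
    refine ⟨liftEequiv G0 l e0, ?_⟩
    simp [he]
  pred l v := by
    obtain ⟨e0, he⟩ := G0.pred l ((liftVequiv G0 (l + 1)).symm v)
    refine ⟨liftEequiv G0 l e0, ?_⟩
    simp [he]
  local_property l u v α := by
    refine (Nat.card_congr (Equiv.subtypeEquiv (liftEequiv G0 (l + 1)).symm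
        (fun e => ?_))).trans
      ((G0.local_property l ((liftVequiv G0 l).symm u) ((liftVequiv G0 (l + 2)).symm v)
          α).trans
        (Nat.card_congr (Equiv.subtypeEquiv (liftEequiv G0 l).symm (fun f => ?_))).symm)
    · simp [Equiv.apply_eq_iff_eq_symm_apply]
    · simp [Equiv.apply_eq_iff_eq_symm_apply]

theorem lift_iso (G0 : LGS.{uu, u2, u3} A) :
    (liftLGS.{uu, vv, ww} G0).Isomorphic G0 := by
  refine ⟨fun l => (liftVequiv G0 l).symm, fun l => (liftEequiv G0 l).symm, ?_, ?_, ?_, ?_⟩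
  · intro l e
    show G0.src l ((liftEequiv G0 l).symm e) = _
    simp [liftLGS]; exact (Equiv.symm_apply_apply _ _).symm
  · intro l e
    show G0.tgt l ((liftEequiv G0 l).symm e) = _
    simp [liftLGS]; exact (Equiv.symm_apply_apply _ _).symm
  · intro l e
    rfl
  · intro l v
    show G0.iota l ((liftVequiv G0 (l + 1)).symm v) = _
    simp [liftLGS]; exact (Equiv.symm_apply_apply _ _).symm

end UniverseLift
/-- for a `λ`-synchronizing subshift `Λ` there exists a left-resolving,
predecessor-separated, `ι`-irreducible, `λ`-synchronizing `λ`-graph system presenting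
`Λ` (namely the canonical one `𝔏^{λ(Λ)}`), and any two such are isomorphic. -/
theorem canonical_unique [TopologicalSpace A] [DiscreteTopology A] [Finite A]
    (Λ : Set (ℤ → A)) (hΛ : IsSubshift Λ) (hls : LambdaSync Λ) :
    (∃ G : LGS A, G.CanonicalProps Λ) ∧
    (∀ G G' : LGS A, G.CanonicalProps Λ → G'.CanonicalProps Λ → G.Isomorphic G') := by
  refine ⟨⟨liftLGS (canLGS hls), props_of_iso (lift_iso (canLGS hls)) (can_props hls)⟩, ?_⟩
  intro G G' hG hG'
  exact iso_trans (iso_to_can hG hls) (iso_symm (iso_to_can hG' hls))
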